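/- arXiv:2406.03037 — 2 statements merged into one kernel-verified Lean document; each statement's English description precedes it below -/
import Mathlib

section
/- For any $\mu, \lambda > 0$, a Poisson random variable with mean $\mu$ is stochastically dominated by $\lceil \mu e^{\lambda} \rceil + E$ where $E$ is an exponential random variable with rate $\lambda$. That is, for all $x \ge 0$, $\mathbb{P}(\mathrm{Pois}(\mu) > x) \le \mathbb{P}(\lceil \mu e^{\lambda} \rceil + \mathrm{Exp}(\lambda) > x)$. -/
open MeasureTheory ProbabilityTheory Real
open scoped NNReal ENNReal

lemma expMeasure_Ioi_aux {l : ℝ} (hl : 0 < l) (a : ℝ) :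
    expMeasure l (Set.Ioi a)
      = 1 - ENNReal.ofReal (if 0 ≤ a then 1 - Real.exp (-(l * a)) else 0) := by
  have hprob : IsProbabilityMeasure (expMeasure l) := isProbabilityMeasure_expMeasure hl
  have hIic : expMeasure l (Set.Iic a)
      = ENNReal.ofReal (if 0 ≤ a then 1 - Real.exp (-(l * a)) else 0) := by
    rw [expMeasure, gammaMeasure, withDensity_apply _ measurableSet_Iic]
    have : ∀ y : ℝ, gammaPDF 1 l y = exponentialPDF l y := by
      intro y; rfl
    simp_rw [this]
    exact lintegral_exponentialPDF_eq_antiDeriv hl a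
  have := measure_compl (μ := expMeasure l) (s := Set.Iic a) measurableSet_Iic
    (measure_ne_top _ _)
  rw [Set.compl_Iic] at this
  rw [this, hIic, measure_univ]

lemma epow_aux {l : ℝ} (hl : 0 < l) : Real.exp l - 1 ≤ l * Real.exp l := by
  have h := Real.add_one_le_exp (-l)
  have he : 0 < Real.exp l := Real.exp_pos l
  nlinarith [Real.exp_neg l, mul_inv_cancel₀ (ne_of_gt he), h, he]

/-- For any `μ, λ > 0`, `Pois(μ) ⪯ ⌈μ e^λ⌉ + Exp(λ)`: for all `x ≥ 0`,
`ℙ(Pois(μ) > x) ≤ ℙ(⌈μ e^λ⌉ + Exp(λ) > x)`. -/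
theorem stmt_1 (μ : ℝ≥0) (l : ℝ) (hμ : 0 < μ) (hl : 0 < l) :
    ∀ x : ℝ, 0 ≤ x →
      poissonMeasure μ {n : ℕ | x < (n : ℝ)}
        ≤ expMeasure l {t : ℝ | x < (⌈(μ : ℝ) * Real.exp l⌉ : ℝ) + t} := by
  intro x hx
  set M : ℝ := (⌈(μ : ℝ) * Real.exp l⌉ : ℝ) with hM
  have hprob : IsProbabilityMeasure (expMeasure l) := isProbabilityMeasure_expMeasure hl
  have hset : {t : ℝ | x < M + t} = Set.Ioi (x - M) := by
    ext t; simp [Set.mem_Ioi, sub_lt_iff_lt_add']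
  rw [hset, expMeasure_Ioi_aux hl]
  set c : ℝ := (μ : ℝ) * Real.exp l with hc
  have hc0 : 0 < c := mul_pos hμ (Real.exp_pos l)
  have hcM : c ≤ M := Int.le_ceil _
  by_cases hxM : x - M < 0
  · rw [if_neg (not_le.mpr hxM)]
    simp only [ENNReal.ofReal_zero, tsub_zero]
    exact prob_le_one
  · push_neg at hxM
    rw [if_pos hxM]
    have hexp01 : 0 ≤ 1 - Real.exp (-(l * (x - M))) := by
      have : Real.exp (-(l * (x - M))) ≤ 1 := by
        rw [Real.exp_le_one_iff]
        nlinarith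
      linarith
    have hrhs : (1 : ℝ≥0∞) - ENNReal.ofReal (1 - Real.exp (-(l * (x - M))))
        = ENNReal.ofReal (Real.exp (-(l * (x - M)))) := by
      rw [← ENNReal.ofReal_one, ← ENNReal.ofReal_sub _ hexp01]
      ring_nf
    rw [hrhs]
    -- Chernoff bound for the Poisson tail
    have hmeas : poissonMeasure μ {n : ℕ | x < (n : ℝ)}
        = ∑' n : ℕ, Set.indicator {n : ℕ | x < (n : ℝ)} (⇑(poissonPMF μ)) n := by
      rw [poissonMeasure, Measure.sum_apply _ MeasurableSet.of_discrete]
      congr 1; ext n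
      rw [Measure.smul_apply, Measure.dirac_apply' _ MeasurableSet.of_discrete]
      by_cases h : n ∈ {n : ℕ | x < (n : ℝ)}
      · simp only [Set.indicator_of_mem h, Pi.one_apply, smul_eq_mul, mul_one]; rfl
      · simp [Set.indicator_of_notMem h]
    rw [hmeas]
    have hterm : ∀ n : ℕ, Set.indicator {n : ℕ | x < (n : ℝ)} (⇑(poissonPMF μ)) n
        ≤ ENNReal.ofReal (Real.exp (-(l * x)) * Real.exp (-(μ : ℝ)) * (c ^ n / n.factorial)) := by
      intro n
      by_cases hn : x < (n : ℝ)
      · rw [Set.indicator_of_mem (show n ∈ {n : ℕ | x < (n : ℝ)} from hn)]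
        show ENNReal.ofReal (poissonPMFReal μ n) ≤ _
        apply ENNReal.ofReal_le_ofReal
        rw [poissonPMFReal]
        have hfac : (0:ℝ) < n.factorial := by positivity
        rw [div_le_iff₀ hfac]
        have hcn : c ^ n = (μ:ℝ) ^ n * Real.exp (l * n) := by
          rw [hc, mul_pow, ← Real.exp_nat_mul]
          ring_nf
        have h1 : (1:ℝ) ≤ Real.exp (-(l * x)) * Real.exp (l * n) := by
          rw [← Real.exp_add]
          have : (0:ℝ) ≤ -(l * x) + l * n := by nlinarith
          calc (1:ℝ) = Real.exp 0 := (Real.exp_zero).symm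
            _ ≤ _ := Real.exp_le_exp.mpr this
        have hμn : (0:ℝ) ≤ Real.exp (-(μ:ℝ)) * (μ:ℝ) ^ n := by positivity
        calc Real.exp (-(μ:ℝ)) * (μ:ℝ) ^ n
            = 1 * (Real.exp (-(μ:ℝ)) * (μ:ℝ) ^ n) := by ring
          _ ≤ (Real.exp (-(l * x)) * Real.exp (l * n)) * (Real.exp (-(μ:ℝ)) * (μ:ℝ) ^ n) :=
              mul_le_mul_of_nonneg_right h1 hμn
          _ = Real.exp (-(l * x)) * Real.exp (-(μ:ℝ)) * ((μ:ℝ) ^ n * Real.exp (l * n)) := by ring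
          _ = Real.exp (-(l * x)) * Real.exp (-(μ:ℝ)) * c ^ n := by rw [hcn]
          _ = Real.exp (-(l * x)) * Real.exp (-(μ:ℝ)) * (c ^ n / n.factorial) * n.factorial := by
              field_simp
      · rw [Set.indicator_of_notMem (show n ∉ {n : ℕ | x < (n : ℝ)} from hn)]
        exact zero_le
    calc ∑' n : ℕ, Set.indicator {n : ℕ | x < (n : ℝ)} (⇑(poissonPMF μ)) n
        ≤ ∑' n : ℕ, ENNReal.ofReal
            (Real.exp (-(l * x)) * Real.exp (-(μ : ℝ)) * (c ^ n / n.factorial)) :=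
          ENNReal.tsum_le_tsum hterm
      _ = ENNReal.ofReal (Real.exp (-(l * x)) * Real.exp (-(μ : ℝ)) * Real.exp c) := by
          have hsum : HasSum (fun n : ℕ ↦ c ^ n / n.factorial) (Real.exp c) := by
            rw [Real.exp_eq_exp_ℝ]
            exact NormedSpace.expSeries_div_hasSum_exp (𝔸 := ℝ) c
          have heq : ∀ n : ℕ,
              ENNReal.ofReal (Real.exp (-(l * x)) * Real.exp (-(μ : ℝ)) * (c ^ n / n.factorial))
              = ENNReal.ofReal (Real.exp (-(l * x)) * Real.exp (-(μ : ℝ)))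
                * ENNReal.ofReal (c ^ n / n.factorial) := by
            intro n
            rw [← ENNReal.ofReal_mul (by positivity)]
          simp_rw [heq]
          rw [ENNReal.tsum_mul_left,
            ← ENNReal.ofReal_tsum_of_nonneg (fun n ↦ by positivity) hsum.summable,
            hsum.tsum_eq, ← ENNReal.ofReal_mul (by positivity)]
      _ ≤ ENNReal.ofReal (Real.exp (-(l * (x - M)))) := by
          apply ENNReal.ofReal_le_ofReal
          rw [← Real.exp_add, ← Real.exp_add, Real.exp_le_exp]
          have h1 : c - (μ:ℝ) ≤ l * c := by
            have := epow_aux hl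
            have : (μ:ℝ) * (Real.exp l - 1) ≤ (μ:ℝ) * (l * Real.exp l) :=
              mul_le_mul_of_nonneg_left this (le_of_lt hμ)
            nlinarith
          have h2 : l * c ≤ l * M := mul_le_mul_of_nonneg_left hcM (le_of_lt hl)
          nlinarith
end

section
/- Let $X_1, \dots, X_k$ be i.i.d. uniform random variables on $\{1,\dots,N\}$ with $\sqrt{N} \le k \le N$, and let $X$ be the number of sites in $\{1,\dots,N\}$ occupied by at least two of the $X_i$. Then $\mathbb{P}\left(X \ge \frac{k^2}{6N}\right) \ge \frac{1}{73}$ for all sufficiently large $N$. -/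
set_option maxHeartbeats 1000000


open Finset Real

/-- The number of sites of `[N]` occupied by at least two of `ω : Fin k → Fin N`. -/
def multiplyOccupied (N k : ℕ) (ω : Fin k → Fin N) : ℕ :=
  (Finset.univ.filter fun u : Fin N =>
    2 ≤ (Finset.univ.filter fun i : Fin k => ω i = u).card).card

/-- The number of sites of `[N]` occupied by exactly two of the labels. -/
def exact2 (N k : ℕ) (ω : Fin k → Fin N) : ℕ :=
  (univ.filter fun u : Fin N => (univ.filter fun i : Fin k => ω i = u).card = 2).card

section counting

variable {N k : ℕ}

lemma exact2_le_multiplyOccupied (ω : Fin k → Fin N) :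
    exact2 N k ω ≤ multiplyOccupied N k ω := by
  apply card_le_card
  intro u hu
  simp only [mem_filter] at hu ⊢
  exact ⟨hu.1, le_of_eq hu.2.symm⟩

lemma card_fiber_eq (u : Fin N) (s : Finset (Fin k)) :
    (univ.filter fun ω : Fin k → Fin N =>
      (univ.filter fun i => ω i = u) = s).card = (N-1)^(k - s.card) := by
  have h1 : (univ.filter fun ω : Fin k → Fin N =>
      (univ.filter fun i => ω i = u) = s).card
      = Fintype.card {ω : Fin k → Fin N // ∀ i, ω i = u ↔ i ∈ s} := by
    rw [Fintype.card_subtype]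
    congr 1
    apply filter_congr
    intro ω _
    simp [Finset.ext_iff]
  rw [h1]
  have e : {ω : Fin k → Fin N // ∀ i, ω i = u ↔ i ∈ s}
      ≃ ({ i : Fin k // i ∉ s} → {v : Fin N // v ≠ u}) :=
    { toFun := fun ω i => ⟨ω.1 i.1, fun h => i.2 ((ω.2 i.1).1 h)⟩
      invFun := fun g => ⟨fun i => if h : i ∈ s then u else (g ⟨i, h⟩).1,
        fun i => by
          constructor
          · intro h
            by_contra hs
            simp only [dif_neg hs] at h
            exact (g ⟨i, hs⟩).2 h
          · intro h; simp only [dif_pos h]⟩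
      left_inv := fun ω => by
        apply Subtype.ext
        funext i
        dsimp
        split_ifs with h
        · exact ((ω.2 i).2 h).symm
        · rfl
      right_inv := fun g => by
        funext i
        apply Subtype.ext
        dsimp
        rw [dif_neg i.2] }
  rw [Fintype.card_congr e, Fintype.card_fun]
  congr 1
  · rw [Fintype.card_subtype_compl, Fintype.card_subtype_eq, Fintype.card_fin]
  · rw [Fintype.card_subtype_compl, Fintype.card_coe, Fintype.card_fin]

lemma card_fiber_pair_eq {u v : Fin N} (huv : u ≠ v) (s s' : Finset (Fin k))
    (hd : Disjoint s s') :
    (univ.filter fun ω : Fin k → Fin N =>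
      (univ.filter fun i => ω i = u) = s ∧ (univ.filter fun i => ω i = v) = s').card
      = (N-2)^(k - s.card - s'.card) := by
  have h1 : (univ.filter fun ω : Fin k → Fin N =>
      (univ.filter fun i => ω i = u) = s ∧ (univ.filter fun i => ω i = v) = s').card
      = Fintype.card {ω : Fin k → Fin N //
          (∀ i, ω i = u ↔ i ∈ s) ∧ (∀ i, ω i = v ↔ i ∈ s')} := by
    rw [Fintype.card_subtype]
    congr 1
    apply filter_congr
    intro ω _
    simp [Finset.ext_iff]
  rw [h1]
  have e : {ω : Fin k → Fin N // (∀ i, ω i = u ↔ i ∈ s) ∧ (∀ i, ω i = v ↔ i ∈ s')}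
      ≃ ({ i : Fin k // ¬(i ∈ s ∨ i ∈ s')} → {w : Fin N // ¬(w = u ∨ w = v)}) :=
    { toFun := fun ω i => ⟨ω.1 i.1, by
        rintro (h | h)
        · exact i.2 (Or.inl ((ω.2.1 i.1).1 h))
        · exact i.2 (Or.inr ((ω.2.2 i.1).1 h))⟩
      invFun := fun g => ⟨fun i => if h : i ∈ s then u else if h' : i ∈ s' then v
          else (g ⟨i, by tauto⟩).1, by
        constructor
        · intro i
          constructor
          · intro h
            by_contra hs
            simp only [dif_neg hs] at h
            by_cases hs' : i ∈ s'
            · simp only [dif_pos hs'] at h; exact huv h.symm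
            · simp only [dif_neg hs'] at h
              exact (g ⟨i, by tauto⟩).2 (Or.inl h)
          · intro h; simp only [dif_pos h]
        · intro i
          constructor
          · intro h
            by_cases hs : i ∈ s
            · simp only [dif_pos hs] at h; exact absurd h huv
            · simp only [dif_neg hs] at h
              by_contra hs'
              simp only [dif_neg hs'] at h
              exact (g ⟨i, by tauto⟩).2 (Or.inr h)
          · intro h
            have hs : i ∉ s := fun hs => (Finset.disjoint_left.1 hd hs) h
            simp only [dif_neg hs, dif_pos h]⟩
      left_inv := fun ω => by
        apply Subtype.ext
        funext i
        dsimp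
        split_ifs with h h'
        · exact ((ω.2.1 i).2 h).symm
        · exact ((ω.2.2 i).2 h').symm
        · rfl
      right_inv := fun g => by
        funext i
        apply Subtype.ext
        have h1 : i.1 ∉ s := fun h => i.2 (Or.inl h)
        have h2 : i.1 ∉ s' := fun h => i.2 (Or.inr h)
        dsimp
        simp only [dif_neg h1, dif_neg h2] }
  rw [Fintype.card_congr e, Fintype.card_fun]
  congr 1
  · rw [Fintype.card_subtype]
    have : (univ.filter fun w : Fin N => ¬(w = u ∨ w = v)) = univ \ {u, v} := by
      ext w; simp [not_or]
    rw [this, card_sdiff_of_subset (by simp), card_univ, Fintype.card_fin,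
      card_pair huv]
  · rw [Fintype.card_subtype]
    have : (univ.filter fun i : Fin k => ¬(i ∈ s ∨ i ∈ s')) = univ \ (s ∪ s') := by
      ext i; simp [not_or]
    rw [this, card_sdiff_of_subset (by simp), card_univ, Fintype.card_fin,
      card_union_of_disjoint hd, Nat.sub_sub]

lemma card_exact2 (u : Fin N) :
    (univ.filter fun ω : Fin k → Fin N =>
      (univ.filter fun i => ω i = u).card = 2).card = k.choose 2 * (N-1)^(k-2) := by
  rw [card_eq_sum_card_fiberwise (f := fun ω : Fin k → Fin N => univ.filter fun i => ω i = u)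
    (t := powersetCard 2 univ) (fun ω hω => by
      simp only [mem_coe, mem_filter] at hω
      exact mem_powersetCard.2 ⟨subset_univ _, hω.2⟩)]
  have : ∀ s ∈ powersetCard 2 (univ : Finset (Fin k)),
      ((univ.filter fun ω : Fin k → Fin N =>
        (univ.filter fun i => ω i = u).card = 2).filter
          fun ω => (univ.filter fun i => ω i = u) = s).card = (N-1)^(k-2) := by
    intro s hs
    obtain ⟨-, hcard⟩ := mem_powersetCard.1 hs
    rw [filter_filter]
    have heq : (univ.filter fun ω : Fin k → Fin N =>
        ((univ.filter fun i => ω i = u).card = 2) ∧ (univ.filter fun i => ω i = u) = s)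
        = univ.filter fun ω : Fin k → Fin N => (univ.filter fun i => ω i = u) = s := by
      apply filter_congr
      intro ω _
      constructor
      · exact fun h => h.2
      · exact fun h => ⟨by rw [h, hcard], h⟩
    rw [heq, card_fiber_eq u s, hcard]
  rw [sum_congr rfl this, sum_const, card_powersetCard, card_univ, Fintype.card_fin, smul_eq_mul]

lemma card_exact2_pair {u v : Fin N} (huv : u ≠ v) :
    (univ.filter fun ω : Fin k → Fin N =>
      (univ.filter fun i => ω i = u).card = 2 ∧ (univ.filter fun i => ω i = v).card = 2).card
      = k.choose 2 * ((k-2).choose 2) * (N-2)^(k-4) := by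
  classical
  set fib : Fin N → (Fin k → Fin N) → Finset (Fin k) :=
    fun w ω => univ.filter fun i => ω i = w with hfib
  have hdisj : ∀ ω : Fin k → Fin N, Disjoint (fib u ω) (fib v ω) := by
    intro ω
    rw [Finset.disjoint_left]
    intro i hi hi'
    simp only [hfib, mem_filter] at hi hi'
    exact huv (hi.2 ▸ hi'.2 ▸ rfl)
  rw [card_eq_sum_card_fiberwise (f := fun ω => (fib u ω, fib v ω))
    (t := ((powersetCard 2 univ) ×ˢ (powersetCard 2 univ)).filter fun p => Disjoint p.1 p.2)
    (fun ω hω => by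
      simp only [mem_coe, mem_filter] at hω ⊢
      refine ⟨mem_product.2 ⟨mem_powersetCard.2 ⟨subset_univ _, hω.2.1⟩,
        mem_powersetCard.2 ⟨subset_univ _, hω.2.2⟩⟩, hdisj ω⟩)]
  have hterm : ∀ p ∈ ((powersetCard 2 (univ : Finset (Fin k))) ×ˢ (powersetCard 2 univ)).filter
      (fun p => Disjoint p.1 p.2),
      ((univ.filter fun ω : Fin k → Fin N => (fib u ω).card = 2 ∧ (fib v ω).card = 2).filter
        fun ω => (fib u ω, fib v ω) = p).card = (N-2)^(k-4) := by
    rintro ⟨s, s'⟩ hp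
    simp only [mem_filter, mem_product, mem_powersetCard] at hp
    obtain ⟨⟨⟨-, hc1⟩, ⟨-, hc2⟩⟩, hd⟩ := hp
    rw [filter_filter]
    have heq : (univ.filter fun ω : Fin k → Fin N =>
        (((fib u ω).card = 2 ∧ (fib v ω).card = 2) ∧ (fib u ω, fib v ω) = (s, s')))
        = univ.filter fun ω : Fin k → Fin N => fib u ω = s ∧ fib v ω = s' := by
      apply filter_congr
      intro ω _
      simp only [Prod.mk.injEq]
      constructor
      · exact fun h => h.2
      · rintro ⟨h1, h2⟩
        exact ⟨⟨by rw [h1, hc1], by rw [h2, hc2]⟩, h1, h2⟩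
    rw [heq, card_fiber_pair_eq huv s s' hd, hc1, hc2]
    norm_num [Nat.sub_sub]
  rw [sum_congr rfl hterm, sum_const, smul_eq_mul]
  congr 1
  rw [card_filter]
  rw [Finset.sum_product]
  have : ∀ s ∈ powersetCard 2 (univ : Finset (Fin k)),
      (∑ s' ∈ powersetCard 2 (univ : Finset (Fin k)), if Disjoint s s' then 1 else 0)
        = (k-2).choose 2 := by
    intro s hs
    obtain ⟨-, hc⟩ := mem_powersetCard.1 hs
    rw [← card_filter]
    have : (powersetCard 2 (univ : Finset (Fin k))).filter (fun s' => Disjoint s s')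
        = powersetCard 2 sᶜ := by
      ext s'
      simp only [mem_filter, mem_powersetCard, subset_univ, true_and]
      rw [← le_compl_iff_disjoint_left, and_comm]
    rw [this, card_powersetCard, card_compl, Fintype.card_fin, hc]
  rw [sum_congr rfl this, sum_const, card_powersetCard, card_univ, Fintype.card_fin, smul_eq_mul]

lemma sum_exact2 :
    ∑ ω : Fin k → Fin N, exact2 N k ω = N * (k.choose 2 * (N-1)^(k-2)) := by
  unfold exact2
  rw [sum_congr rfl (fun ω (_ : ω ∈ univ) => card_filter _ _)]
  rw [Finset.sum_comm]
  have : ∀ u : Fin N, (∑ ω : Fin k → Fin N,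
      if (univ.filter fun i => ω i = u).card = 2 then 1 else 0)
      = k.choose 2 * (N-1)^(k-2) := by
    intro u
    rw [← card_filter]
    exact card_exact2 u
  rw [sum_congr rfl (fun u _ => this u), sum_const, card_univ, Fintype.card_fin, smul_eq_mul]

lemma sum_exact2_sq :
    ∑ ω : Fin k → Fin N, (exact2 N k ω)^2
      = N * (k.choose 2 * (N-1)^(k-2))
        + N * (N-1) * (k.choose 2 * ((k-2).choose 2) * (N-2)^(k-4)) := by
  unfold exact2
  have expand : ∀ ω : Fin k → Fin N,
      ((univ.filter fun u : Fin N => (univ.filter fun i => ω i = u).card = 2).card)^2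
      = ∑ u : Fin N, ∑ v : Fin N,
          if ((univ.filter fun i => ω i = u).card = 2 ∧ (univ.filter fun i => ω i = v).card = 2)
          then 1 else 0 := by
    intro ω
    rw [card_filter, sq, Finset.sum_mul_sum]
    congr 1; funext u; congr 1; funext v
    split_ifs with h1 h2 h3 h4 <;> simp_all
  rw [sum_congr rfl (fun ω _ => expand ω)]
  rw [Finset.sum_comm]
  have swap2 : ∀ u : Fin N, (∑ ω : Fin k → Fin N, ∑ v : Fin N,
      if ((univ.filter fun i => ω i = u).card = 2 ∧ (univ.filter fun i => ω i = v).card = 2)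
      then 1 else 0)
      = ∑ v : Fin N, ∑ ω : Fin k → Fin N,
      (if ((univ.filter fun i => ω i = u).card = 2 ∧ (univ.filter fun i => ω i = v).card = 2)
      then 1 else 0) := fun u => Finset.sum_comm
  rw [sum_congr rfl (fun u _ => swap2 u)]
  have inner : ∀ u : Fin N, (∑ v : Fin N, ∑ ω : Fin k → Fin N,
      (if ((univ.filter fun i => ω i = u).card = 2 ∧ (univ.filter fun i => ω i = v).card = 2)
      then 1 else 0))
      = k.choose 2 * (N-1)^(k-2)
        + (N-1) * (k.choose 2 * ((k-2).choose 2) * (N-2)^(k-4)) := by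
    intro u
    rw [← Finset.add_sum_erase _ _ (mem_univ u)]
    congr 1
    · rw [← card_filter]
      simp only [and_self]
      exact card_exact2 u
    · have : ∀ v ∈ univ.erase u, (∑ ω : Fin k → Fin N,
          if ((univ.filter fun i => ω i = u).card = 2 ∧ (univ.filter fun i => ω i = v).card = 2)
          then 1 else 0)
          = k.choose 2 * ((k-2).choose 2) * (N-2)^(k-4) := by
        intro v hv
        rw [← card_filter]
        exact card_exact2_pair (Ne.symm (mem_erase.1 hv).1)
      rw [sum_congr rfl this, sum_const, card_erase_of_mem (mem_univ u), card_univ,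
        Fintype.card_fin, smul_eq_mul]
  rw [sum_congr rfl (fun u _ => inner u), sum_const, card_univ, Fintype.card_fin, smul_eq_mul]
  ring

lemma cubic_ineq (hk : 4 ≤ k) (hkN : k ≤ N) :
    N^3 * ((k-2).choose 2) ≤ k.choose 2 * (N-1)^3 := by
  have h2k : (2:ℕ) ≤ k := by omega
  have h1N : (1:ℕ) ≤ N := by omega
  have hc1 : ((k.choose 2 : ℕ) : ℝ) = (k:ℝ) * ((k:ℝ) - 1) / 2 := by
    rw [Nat.cast_choose_two]
  have hc2 : (((k-2).choose 2 : ℕ) : ℝ) = ((k:ℝ) - 2) * ((k:ℝ) - 3) / 2 := by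
    rw [Nat.cast_choose_two]
    have : ((k - 2 : ℕ) : ℝ) = (k:ℝ) - 2 := by
      push_cast [Nat.cast_sub h2k]; ring
    rw [this]; ring
  have goalR : ((N:ℝ))^3 * (((k:ℝ) - 2) * ((k:ℝ) - 3) / 2)
      ≤ ((k:ℝ) * ((k:ℝ) - 1) / 2) * ((N:ℝ) - 1)^3 := by
    have hK4 : (4:ℝ) ≤ (k:ℝ) := by exact_mod_cast hk
    have hKn : (k:ℝ) ≤ (N:ℝ) := by exact_mod_cast hkN
    set K := (k:ℝ); set n := (N:ℝ)
    have h1 : (K-2)*(K-3)*K^2 ≤ (K-1)^4 := by nlinarith [sq_nonneg K, sq_nonneg (K-1)]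
    have h2 : n*(K-1) ≤ K*(n-1) := by nlinarith
    have h3 : (n*(K-1))^3 ≤ (K*(n-1))^3 := by
      apply pow_le_pow_left₀ (by nlinarith) h2
    have hA : K^3 * (n^3*((K-2)*(K-3)/2)) ≤ n^3 * K * (K-1)^4 / 2 := by
      nlinarith [mul_le_mul_of_nonneg_left h1 (show (0:ℝ) ≤ n^3*K by positivity)]
    have hB : n^3 * K * (K-1)^4 / 2 ≤ K^3 * ((K*(K-1)/2)*(n-1)^3) := by
      nlinarith [mul_le_mul_of_nonneg_left h3 (show (0:ℝ) ≤ K*(K-1) by nlinarith)]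
    have := hA.trans hB
    have hK3 : (0:ℝ) < K^3 := by positivity
    exact le_of_mul_le_mul_left this hK3
  have : (((N^3 * ((k-2).choose 2)) : ℕ) : ℝ) ≤ (((k.choose 2 * (N-1)^3) : ℕ) : ℝ) := by
    push_cast [hc2, hc1, Nat.cast_sub h1N]
    convert goalR using 2 <;> ring
  exact_mod_cast this

lemma key_ineq (hk : 4 ≤ k) (hkN : k ≤ N) (hN : 2 ≤ N) :
    N*(N-1) * (k.choose 2 * ((k-2).choose 2) * (N-2)^(k-4)) * N^k
      ≤ (N * (k.choose 2 * (N-1)^(k-2)))^2 := by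
  obtain ⟨m, rfl⟩ : ∃ m, k = m + 4 := ⟨k - 4, by omega⟩
  have e1 : N*(N-2) ≤ (N-1)^2 := by
    rcases N with _|_|n
    · omega
    · omega
    · have h1 : n + 2 - 2 = n := by omega
      have h2 : n + 2 - 1 = n + 1 := by omega
      rw [h1, h2]
      nlinarith
  have p1 : (N*(N-2))^m ≤ ((N-1)^2)^m := Nat.pow_le_pow_left e1 m
  have e2 : N^3 * (((m+4)-2).choose 2) ≤ (m+4).choose 2 * (N-1)^3 := cubic_ineq hk hkN
  have estep : (m + 4) - 4 = m := by omega
  have estep2 : (m + 4) - 2 = m + 2 := by omega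
  rw [estep, estep2] at *
  calc N*(N-1) * ((m+4).choose 2 * ((m+2).choose 2) * (N-2)^m) * N^(m+4)
      = (N^3 * ((m+2).choose 2)) * ((N*(N-2))^m) * (N^2 * (N-1) * ((m+4).choose 2)) := by
        rw [pow_add, mul_pow]; ring
    _ ≤ ((m+4).choose 2 * (N-1)^3) * (((N-1)^2)^m) * (N^2 * (N-1) * ((m+4).choose 2)) :=
        Nat.mul_le_mul (Nat.mul_le_mul e2 p1) le_rfl
    _ = (N * ((m+4).choose 2 * (N-1)^(m+2)))^2 := by
        have h : ((N-1)^2)^m = (N-1)^(2*m) := by rw [← pow_mul]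
        rw [h]; ring

end counting

section moments

variable {Ω : Type*} [Fintype Ω]

/-- Paley–Zygmund, counting form. -/
lemma pz_count (f : Ω → ℕ) (t : ℝ) (ht : 0 ≤ t)
    (h : t * (Fintype.card Ω : ℝ) ≤ ∑ ω : Ω, (f ω : ℝ)) :
    ((∑ ω : Ω, (f ω : ℝ)) - t * Fintype.card Ω)^2
      ≤ (∑ ω : Ω, (f ω : ℝ)^2) * (univ.filter fun ω => t ≤ (f ω : ℝ)).card := by
  classical
  set A := univ.filter fun ω : Ω => t ≤ (f ω : ℝ) with hA
  have hsplit : (∑ ω : Ω, (f ω : ℝ)) = ∑ ω ∈ A, (f ω : ℝ)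
      + ∑ ω ∈ univ.filter (fun ω => ¬ (t ≤ (f ω : ℝ))), (f ω : ℝ) :=
    (sum_filter_add_sum_filter_not univ _ _).symm
  have h2 : ∑ ω ∈ univ.filter (fun ω => ¬ (t ≤ (f ω : ℝ))), (f ω : ℝ)
      ≤ t * Fintype.card Ω := by
    calc ∑ ω ∈ univ.filter (fun ω => ¬ (t ≤ (f ω : ℝ))), (f ω : ℝ)
        ≤ ∑ _ω ∈ univ.filter (fun ω => ¬ (t ≤ (f ω : ℝ))), t := by
          apply sum_le_sum
          intro ω hω
          exact le_of_lt (lt_of_not_ge (mem_filter.1 hω).2)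
      _ = t * (univ.filter (fun ω => ¬ (t ≤ (f ω : ℝ)))).card := by
          rw [sum_const, nsmul_eq_mul, mul_comm]
      _ ≤ t * Fintype.card Ω := by
          apply mul_le_mul_of_nonneg_left _ ht
          exact_mod_cast card_filter_le _ _
  have h3 : (∑ ω : Ω, (f ω : ℝ)) - t * Fintype.card Ω ≤ ∑ ω ∈ A, (f ω : ℝ) := by
    rw [hsplit]; linarith
  have h4 : (∑ ω ∈ A, (f ω : ℝ))^2 ≤ (∑ ω ∈ A, (f ω : ℝ)^2) * A.card := by
    have := Finset.sum_mul_sq_le_sq_mul_sq A (fun ω => (f ω : ℝ)) (fun _ => 1)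
    simpa [mul_comm] using this
  have h5 : (∑ ω ∈ A, (f ω : ℝ)^2) ≤ ∑ ω : Ω, (f ω : ℝ)^2 := by
    apply sum_le_sum_of_subset_of_nonneg (subset_univ A)
    intro ω _ _
    positivity
  have h6 : (0:ℝ) ≤ (∑ ω : Ω, (f ω : ℝ)) - t * Fintype.card Ω := by linarith
  calc ((∑ ω : Ω, (f ω : ℝ)) - t * Fintype.card Ω)^2 ≤ (∑ ω ∈ A, (f ω : ℝ))^2 := by
        apply pow_le_pow_left₀ h6 h3
    _ ≤ (∑ ω ∈ A, (f ω : ℝ)^2) * A.card := h4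
    _ ≤ (∑ ω : Ω, (f ω : ℝ)^2) * A.card := by
        apply mul_le_mul_of_nonneg_right h5 (by positivity)

/-- Chebyshev one-sided, counting form. -/
lemma cheb_count (f : Ω → ℕ) (t m : ℝ) (hm : (∑ ω : Ω, (f ω : ℝ)) = m * Fintype.card Ω)
    (htm : t ≤ m) :
    ((Fintype.card Ω : ℝ) - (univ.filter fun ω => t ≤ (f ω : ℝ)).card) * (m - t)^2
      ≤ (∑ ω : Ω, (f ω : ℝ)^2) - m^2 * Fintype.card Ω := by
  classical
  have hvar : (∑ ω : Ω, ((f ω : ℝ) - m)^2)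
      = (∑ ω : Ω, (f ω : ℝ)^2) - m^2 * Fintype.card Ω := by
    have : ∀ ω : Ω, ((f ω : ℝ) - m)^2 = (f ω : ℝ)^2 - 2*m*(f ω : ℝ) + m^2 := by
      intro ω; ring
    rw [sum_congr rfl (fun ω _ => this ω), sum_add_distrib, sum_sub_distrib, ← mul_sum,
      sum_const, card_univ, nsmul_eq_mul, hm]
    ring
  rw [← hvar]
  set A := univ.filter fun ω : Ω => t ≤ (f ω : ℝ) with hA
  have hcompl : ((Fintype.card Ω : ℝ) - A.card)
      = ((univ.filter fun ω : Ω => ¬ (t ≤ (f ω : ℝ))).card : ℝ) := by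
    have := card_filter_add_card_filter_not (s := (univ : Finset Ω))
      (p := fun ω => t ≤ (f ω : ℝ))
    rw [card_univ] at this
    push_cast [← this]
    ring
  rw [hcompl]
  calc ((univ.filter fun ω : Ω => ¬ (t ≤ (f ω : ℝ))).card : ℝ) * (m - t)^2
      = ∑ _ω ∈ univ.filter (fun ω : Ω => ¬ (t ≤ (f ω : ℝ))), (m - t)^2 := by
        rw [sum_const, nsmul_eq_mul]
    _ ≤ ∑ ω ∈ univ.filter (fun ω : Ω => ¬ (t ≤ (f ω : ℝ))), ((f ω : ℝ) - m)^2 := by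
        apply sum_le_sum
        intro ω hω
        have hf : (f ω : ℝ) < t := lt_of_not_ge (mem_filter.1 hω).2
        have h1 : 0 ≤ m - t := by linarith
        have h2 : m - t ≤ m - (f ω : ℝ) := by linarith
        calc (m - t)^2 ≤ (m - (f ω : ℝ))^2 := by nlinarith
          _ = ((f ω : ℝ) - m)^2 := by ring
    _ ≤ ∑ ω : Ω, ((f ω : ℝ) - m)^2 := by
        apply sum_le_sum_of_subset_of_nonneg (subset_univ _)
        intro ω _ _
        positivity

end moments

section arith

/-- threshold is below the mean. -/
lemma tle_lemma (K a : ℝ) (hK : 1000 ≤ K) (ha : 0.3678 ≤ a) (haU : a ≤ 1) :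
    K^2/6 ≤ K*(K-1)/2*a := by
  nlinarith [mul_nonneg (show (0:ℝ) ≤ K - 1000 by linarith) (show (0:ℝ) ≤ K by linarith),
    mul_le_mul_of_nonneg_left ha (show (0:ℝ) ≤ K*(K-1) by nlinarith)]

lemma arithA (n K a B AC S2 : ℝ) (hn : 1000000 ≤ n) (hK : 1000 ≤ K)
    (hK2 : n ≤ K^2) (h8 : 8*K ≤ n) (haL : 1 - K/n ≤ a) (haU : a ≤ 1)
    (hB : 0 < B) (hAC : 0 ≤ AC) (hS2nn : 0 ≤ S2)
    (hPZ : ((K*(K-1)/2*a - K^2/6)*B)^2 ≤ S2 * AC)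
    (hkey : S2 * (B*n) ≤ (K*(K-1)/2*a)*B*(B*n) + ((K*(K-1)/2*a)*B)^2) :
    B*n ≤ 73*AC := by
  have hn0 : (0:ℝ) < n := by linarith
  have ha78 : 7/8 ≤ a := by
    have hKn8 : K/n ≤ 1/8 := by
      rw [div_le_div_iff₀ hn0 (by norm_num : (0:ℝ) < 8)]; linarith
    linarith
  have hKK : 0.999*n ≤ K*(K-1) := by
    nlinarith [mul_nonneg (show (0:ℝ) ≤ K - 1000 by linarith)
      (show (0:ℝ) ≤ K by linarith)]
  have hc1low : 0.437*n ≤ K*(K-1)/2*a := by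
    nlinarith [mul_le_mul_of_nonneg_left ha78 (show (0:ℝ) ≤ K*(K-1) by nlinarith)]
  have hD : K^2/6 ≤ (2/5)*(K*(K-1)/2*a) := by
    nlinarith [mul_le_mul_of_nonneg_left ha78 (show (0:ℝ) ≤ K*(K-1) by nlinarith),
      mul_nonneg (show (0:ℝ) ≤ K - 21 by linarith) (show (0:ℝ) ≤ K by linarith)]
  generalize hg : K*(K-1)/2*a = c1 at hPZ hkey hc1low hD
  have hc1pos : (0:ℝ) < c1 := by linarith
  have h1' : S2 * (B*n) ≤ (c1*n + c1^2)*B^2 := by nlinarith [hkey]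

  have hstep : ((c1-K^2/6)*B)^2 * (B*n) ≤ ((c1*n + c1^2)*B^2) * AC := by
    calc ((c1-K^2/6)*B)^2 * (B*n)
        ≤ (S2 * AC) * (B*n) := mul_le_mul_of_nonneg_right hPZ (by positivity)
      _ = (S2 * (B*n)) * AC := by ring
      _ ≤ ((c1*n + c1^2)*B^2) * AC := mul_le_mul_of_nonneg_right h1' hAC
  have h2 : (c1-K^2/6)^2*(B*n) ≤ (c1*n + c1^2)*AC := by
    have hB2 : (0:ℝ) < B^2 := by positivity
    apply le_of_mul_le_mul_right _ hB2
    nlinarith [hstep]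
  have h35 : (3/5)*c1 ≤ c1 - K^2/6 := by linarith
  have hsqA : ((3/5)*c1)^2 ≤ (c1-K^2/6)^2 :=
    pow_le_pow_left₀ (by positivity) h35 2
  have hq : c1*n + c1^2 ≤ 73*(c1-K^2/6)^2 := by
    nlinarith [hsqA, mul_le_mul_of_nonneg_left hc1low hc1pos.le, hc1pos, hn0]
  have hposq : (0:ℝ) < c1*n + c1^2 := by
    nlinarith [mul_pos hc1pos hn0, sq_nonneg c1]
  have h3 : (c1*n + c1^2) * (B*n) ≤ (c1*n + c1^2) * (73*AC) := by
    nlinarith [mul_le_mul_of_nonneg_right hq (show (0:ℝ) ≤ B*n by positivity), h2]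
  exact le_of_mul_le_mul_left h3 hposq

lemma arithB (n K a B AC S2 : ℝ) (hn : 1000000 ≤ n) (hK : 1000 ≤ K)
    (h8 : n < 8*K) (haE : 0.3678 ≤ a)
    (hB : 0 < B) (hAC : 0 ≤ AC) (hACub : AC ≤ B*n)
    (hch : (B*n - AC)*((K*(K-1)/2*a)/n - K^2/(6*n))^2
      ≤ S2 - ((K*(K-1)/2*a)/n)^2*(B*n))
    (hkey : S2 * (B*n) ≤ (K*(K-1)/2*a)*B*(B*n) + ((K*(K-1)/2*a)*B)^2) :
    B*n ≤ 73*AC := by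
  have hn0 : (0:ℝ) < n := by linarith
  have hKn8 : n/8 ≤ K := by linarith
  have hKK : (n/8)*((n/8)-1) ≤ K*(K-1) := by
    nlinarith [mul_nonneg (show (0:ℝ) ≤ K - n/8 by linarith)
      (show (0:ℝ) ≤ K + n/8 - 1 by nlinarith)]
  have haK : K*(K-1)*0.3678 ≤ K*(K-1)*a :=
    mul_le_mul_of_nonneg_left haE (by nlinarith)
  have hc1B : 123*n ≤ K*(K-1)/2*a := by
    nlinarith [hKK, haK, hn, hn0]
  have hD' : K^2/6 ≤ (10/11)*(K*(K-1)/2*a) := by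
    nlinarith [haK, mul_nonneg (show (0:ℝ) ≤ K - 1000 by linarith)
      (show (0:ℝ) ≤ K by linarith)]
  generalize hg : K*(K-1)/2*a = c1 at hch hkey hc1B hD'
  have hc1pos : (0:ℝ) < c1 := by linarith
  have hRHS : S2 - (c1/n)^2*(B*n) ≤ c1*B := by
    have hBn : (0:ℝ) < B*n := by positivity
    have h2' : S2 ≤ c1*B + c1^2*B/n := by
      apply le_of_mul_le_mul_right _ hBn
      have hexp : (c1*B + c1^2*B/n)*(B*n) = c1*B*(B*n) + (c1*B)^2 := by
        field_simp
      rw [hexp]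
      exact hkey
    have hm2 : (c1/n)^2*(B*n) = c1^2*B/n := by field_simp
    rw [hm2]
    linarith
  have hmt : c1/(11*n) ≤ c1/n - K^2/(6*n) := by
    have hident : c1/n - K^2/(6*n) - c1/(11*n) = ((10/11)*c1 - K^2/6)/n := by ring
    have hpos2 : (0:ℝ) ≤ ((10/11)*c1 - K^2/6)/n := div_nonneg (by linarith) hn0.le
    linarith
  have hgap : 0 ≤ B*n - AC := by linarith
  have hsq' : (c1/(11*n))^2 ≤ (c1/n - K^2/(6*n))^2 :=
    pow_le_pow_left₀ (by positivity) hmt 2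
  have hch2 : (B*n - AC)*(c1/(11*n))^2 ≤ c1*B := by
    calc (B*n - AC)*(c1/(11*n))^2
        ≤ (B*n - AC)*(c1/n - K^2/(6*n))^2 := mul_le_mul_of_nonneg_left hsq' hgap
      _ ≤ S2 - (c1/n)^2*(B*n) := hch
      _ ≤ c1*B := hRHS
  have h121 : (0:ℝ) < 121*n^2 := by positivity
  have hstep2 : (B*n - AC)*c1^2 ≤ (c1*B)*(121*n^2) := by
    have hid : (c1/(11*n))^2 = c1^2/(121*n^2) := by ring
    rw [hid, ← mul_div_assoc] at hch2
    exact (div_le_iff₀ h121).1 hch2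
  have hstep3 : (B*n - AC)*c1 ≤ 121*n^2*B := by
    apply le_of_mul_le_mul_right _ hc1pos
    nlinarith [hstep2]
  have h8' : (123*n)*(B*n - AC) ≤ c1*(B*n - AC) :=
    mul_le_mul_of_nonneg_right hc1B hgap
  have h9 : n*(B*n) ≤ n*(73*AC) := by nlinarith [h8', hstep3, hAC, hn0]
  exact le_of_mul_le_mul_left h9 hn0

end arith

/-- For `√N ≤ k ≤ N` and `N` large, `k` i.i.d. uniform labels on `[N]` produce at
least `k²/(6N)` multiply occupied sites with probability at least `1/73`. -/
theorem stmt_3 :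
    ∃ N₀ : ℕ, ∀ N k : ℕ, N₀ ≤ N → Real.sqrt N ≤ (k : ℝ) → k ≤ N →
      (1 : ℝ) / 73 ≤
        ((Finset.univ.filter fun ω : Fin k → Fin N =>
            (k : ℝ) ^ 2 / (6 * N) ≤ (multiplyOccupied N k ω : ℝ)).card : ℝ)
          / (N : ℝ) ^ k := by
  classical
  use 1000000
  intro N k hN hsk hkN
  have hN2 : 2 ≤ N := by omega
  have hn : (1000000:ℝ) ≤ (N:ℝ) := by exact_mod_cast hN
  have hn0 : (0:ℝ) < (N:ℝ) := by linarith
  have h1000 : (1000:ℝ) ≤ (k:ℝ) := by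
    have h : Real.sqrt 1000000 ≤ Real.sqrt N := Real.sqrt_le_sqrt (by exact_mod_cast hN)
    have h2 : Real.sqrt 1000000 = 1000 := by
      rw [show (1000000:ℝ) = 1000^2 by norm_num, Real.sqrt_sq (by norm_num)]
    linarith [hsk, h2 ▸ h]
  have hk1000 : 1000 ≤ k := by exact_mod_cast h1000
  have hk4 : 4 ≤ k := by omega
  have hNK2 : (N:ℝ) ≤ (k:ℝ)^2 := by
    have h := Real.sq_sqrt (show (0:ℝ) ≤ (N:ℝ) by positivity)
    nlinarith [Real.sqrt_nonneg (N:ℝ)]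
  have hKn : (k:ℝ) ≤ (N:ℝ) := by exact_mod_cast hkN
  -- notation
  set n : ℝ := (N:ℝ) with hn_def
  set K : ℝ := (k:ℝ) with hK_def
  set a : ℝ := ((n-1)/n)^(k-2) with ha_def
  set B : ℝ := n^(k-1) with hB_def
  have hBpos : (0:ℝ) < B := by positivity
  have hbase0 : (0:ℝ) ≤ (n-1)/n := by
    apply div_nonneg <;> linarith
  have hbase1 : (n-1)/n ≤ 1 := by
    rw [div_le_one hn0]; linarith
  have hapos : (0:ℝ) < a := by
    apply pow_pos
    apply div_pos <;> linarith
  have haU : a ≤ 1 := pow_le_one₀ hbase0 hbase1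
  -- Bernoulli lower bound
  have haL : 1 - K/n ≤ a := by
    have hb := one_add_mul_le_pow (a := -(1/n)) (by
      have h01 : 1/n ≤ 1 := by rw [div_le_one hn0]; linarith
      have h02 : 0 < 1/n := by positivity
      linarith) (k-2)
    have he : (1 + (-(1/n))) = (n-1)/n := by
      field_simp
      ring
    have hcast : (((k-2:ℕ)):ℝ) = K - 2 := by
      push_cast [Nat.cast_sub (show 2 ≤ k by omega)]; ring
    rw [he, hcast] at hb
    have hdiff : 1 + (K-2) * (-(1/n)) - (1 - K/n) = 2/n := by ring
    have h2n : (0:ℝ) ≤ 2/n := by positivity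
    linarith
  -- exp lower bound : 0.3678 ≤ a
  have haE : (0.3678:ℝ) ≤ a := by
    have hmono : ((n-1)/n)^(N-1) ≤ a := by
      rw [ha_def]
      exact pow_le_pow_of_le_one hbase0 hbase1 (by omega)
    have hq0 : (0:ℝ) < n - 1 := by linarith
    have hstep : n/(n-1) ≤ Real.exp (1/(n-1)) := by
      have h := Real.add_one_le_exp (1/(n-1))
      have : n/(n-1) = 1/(n-1) + 1 := by field_simp; ring
      linarith [this ▸ h]
    have hpow : (n/(n-1))^(N-1) ≤ Real.exp 1 := by
      calc (n/(n-1))^(N-1) ≤ (Real.exp (1/(n-1)))^(N-1) := by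
            apply pow_le_pow_left₀ (by positivity) hstep
        _ = Real.exp ((N-1:ℕ) * (1/(n-1))) := by rw [Real.exp_nat_mul]
        _ = Real.exp 1 := by
            congr 1
            have hcast : (((N-1:ℕ)):ℝ) = n - 1 := by
              push_cast [Nat.cast_sub (show 1 ≤ N by omega)]; ring
            rw [hcast]
            field_simp
    have hinveq : ((n-1)/n)^(N-1) = ((n/(n-1))^(N-1))⁻¹ := by
      rw [← inv_pow]
      congr 1
      rw [inv_div]
    have hppos : (0:ℝ) < (n/(n-1))^(N-1) := by positivity
    have hinv : (Real.exp 1)⁻¹ ≤ ((n-1)/n)^(N-1) := by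
      rw [hinveq]
      exact inv_anti₀ hppos hpow
    have hexp : (0.3678:ℝ) ≤ (Real.exp 1)⁻¹ := by
      have h9 := Real.exp_one_lt_d9
      have hp := Real.exp_pos 1
      rw [le_inv_comm₀ (by norm_num) hp]
      linarith
    linarith
  -- counting identities
  have hS1 := sum_exact2 (N := N) (k := k)
  have hS2 := sum_exact2_sq (N := N) (k := k)
  have hkey := key_ineq hk4 hkN hN2
  -- real versions
  have hcardΩ : ((Fintype.card (Fin k → Fin N)) : ℝ) = n^k := by
    rw [Fintype.card_fun, Fintype.card_fin, Fintype.card_fin]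
    push_cast
    rfl
  have hnk1 : n^k = B * n := by
    rw [hB_def, ← pow_succ]
    congr 1
    omega
  have hnk2 : B = n^(k-2) * n := by
    rw [hB_def, ← pow_succ]
    congr 1
    omega
  have hanpow : (n-1)^(k-2) = a * n^(k-2) := by
    rw [ha_def, div_pow]
    field_simp
  have hS1R : (∑ ω : Fin k → Fin N, (exact2 N k ω : ℝ)) = (K*(K-1)/2*a) * B := by
    have hcast : (∑ ω : Fin k → Fin N, (exact2 N k ω : ℝ))
        = ((∑ ω : Fin k → Fin N, exact2 N k ω : ℕ) : ℝ) := by push_cast; rfl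
    rw [hcast, hS1]
    push_cast [Nat.cast_choose_two, Nat.cast_sub (show 1 ≤ N by omega)]
    rw [hnk2, hanpow]
    ring
  have hS2nn : (0:ℝ) ≤ ∑ ω : Fin k → Fin N, (exact2 N k ω : ℝ)^2 := by positivity
  have hS2key : (∑ ω : Fin k → Fin N, (exact2 N k ω : ℝ)^2) * (B*n)
      ≤ (K*(K-1)/2*a)*B*(B*n) + ((K*(K-1)/2*a)*B)^2 := by
    have hcast2 : (∑ ω : Fin k → Fin N, (exact2 N k ω : ℝ)^2)
        = ((∑ ω : Fin k → Fin N, (exact2 N k ω)^2 : ℕ) : ℝ) := by push_cast; rfl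
    have hineqN : (∑ ω : Fin k → Fin N, (exact2 N k ω)^2) * N^k
        ≤ (∑ ω : Fin k → Fin N, exact2 N k ω) * N^k
          + (∑ ω : Fin k → Fin N, exact2 N k ω)^2 := by
      rw [hS2, hS1, add_mul]
      exact Nat.add_le_add_left hkey _
    have hcast1 : (∑ ω : Fin k → Fin N, (exact2 N k ω : ℝ))
        = ((∑ ω : Fin k → Fin N, exact2 N k ω : ℕ) : ℝ) := by push_cast; rfl
    have hcastineq : (∑ ω : Fin k → Fin N, (exact2 N k ω : ℝ)^2) * n^k
        ≤ (∑ ω : Fin k → Fin N, (exact2 N k ω : ℝ)) * n^k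
          + (∑ ω : Fin k → Fin N, (exact2 N k ω : ℝ))^2 := by
      rw [hcast2, hcast1, hn_def]
      exact_mod_cast hineqN
    rw [hS1R, hnk1] at hcastineq
    exact hcastineq
  -- the event
  set t : ℝ := K^2/(6*n) with ht_def
  have ht0 : 0 ≤ t := by positivity
  set Acard := (univ.filter fun ω : Fin k → Fin N => t ≤ ((exact2 N k ω : ℕ) : ℝ)).card
    with hAcard_def
  have hAub : (Acard:ℝ) ≤ B*n := by
    rw [← hnk1, ← hcardΩ]
    exact_mod_cast card_filter_le _ _
  have hA0 : (0:ℝ) ≤ (Acard:ℝ) := by positivity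
  have hsubev : Acard ≤ (Finset.univ.filter fun ω : Fin k → Fin N =>
      t ≤ (multiplyOccupied N k ω : ℝ)).card := by
    apply card_le_card
    intro ω hω
    simp only [mem_filter, mem_univ, true_and] at hω ⊢
    refine le_trans hω ?_
    exact_mod_cast exact2_le_multiplyOccupied ω
  have htle : K^2/6 ≤ K*(K-1)/2*a := tle_lemma K a h1000 haE haU
  have hfin : B*n ≤ 73 * (Acard : ℝ) := by
    by_cases hcase : 8*k ≤ N
    · -- Case A: Paley–Zygmund second moment argument
      have h8K : 8*K ≤ n := by
        rw [hK_def, hn_def]; exact_mod_cast hcase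
      have htS : t * n^k ≤ ∑ ω : Fin k → Fin N, (exact2 N k ω : ℝ) := by
        rw [hS1R, hnk1, ht_def]
        have he2 : K^2/(6*n)*(B*n) = K^2/6 * B := by field_simp
        rw [he2]
        exact mul_le_mul_of_nonneg_right htle hBpos.le
      have hPZ := pz_count (exact2 N k) t ht0 (by rw [hcardΩ]; exact htS)
      rw [hcardΩ, hS1R, ← hAcard_def] at hPZ
      have he1 : (K*(K-1)/2*a)*B - t*n^k = (K*(K-1)/2*a - K^2/6)*B := by
        rw [hnk1, ht_def]; field_simp
      rw [he1] at hPZ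
      exact arithA n K a B (Acard:ℝ) _ hn h1000 hNK2 h8K haL haU hBpos hA0 hS2nn hPZ hS2key
    · -- Case B: Chebyshev
      push_neg at hcase
      have h8K : n < 8*K := by
        rw [hK_def, hn_def]; exact_mod_cast hcase
      have hm : (∑ ω : Fin k → Fin N, (exact2 N k ω : ℝ))
          = ((K*(K-1)/2*a)/n) * (Fintype.card (Fin k → Fin N) : ℝ) := by
        rw [hcardΩ, hS1R, hnk1]
        field_simp
      have htm : t ≤ (K*(K-1)/2*a)/n := by
        rw [ht_def]
        have e3 : K^2/(6*n) = (K^2/6)/n := by ring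
        rw [e3]
        gcongr
      have hch := cheb_count (exact2 N k) t ((K*(K-1)/2*a)/n) hm htm
      rw [hcardΩ, ← hAcard_def, hnk1, ht_def] at hch
      exact arithB n K a B (Acard:ℝ) _ hn h1000 h8K haE hBpos hA0 hAub hch hS2key
  rw [le_div_iff₀ (by positivity : (0:ℝ) < n^k)]
  have hsub' : ((Acard:ℕ) : ℝ)
      ≤ ((Finset.univ.filter fun ω : Fin k → Fin N =>
        t ≤ (multiplyOccupied N k ω : ℝ)).card : ℝ) := Nat.cast_le.mpr hsubev
  rw [hnk1]
  linarith
end
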